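/- For every n ≥ 0 the diagonal map Δⁿ → Δⁿ × Δⁿ is a retract of the diagonal map (Δ¹)ⁿ → (Δ¹)ⁿ × (Δ¹)ⁿ in the arrow category of simplicial sets. -/

import Mathlib

universe u

open CategoryTheory Limits Simplicial SSet

namespace Paper

/-- A morphism `f` is a retract of a morphism `g` in the arrow category. -/
def RetractOfArrow {C : Type*} [Category C] {A B X Y : C} (f : A ⟶ B) (g : X ⟶ Y) : Prop :=
  ∃ (i : A ⟶ X) (r : X ⟶ A) (i' : B ⟶ Y) (r' : Y ⟶ B),
    i ≫ r = 𝟙 A ∧ i' ≫ r' = 𝟙 B ∧ i ≫ g = f ≫ i' ∧ g ≫ r' = r ≫ f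

/-- A class of morphisms is stable under retracts. -/
def StableUnderRetracts {C : Type*} [Category C] (P : MorphismProperty C) : Prop :=
  ∀ ⦃A B X Y : C⦄ (f : A ⟶ B) (g : X ⟶ Y), RetractOfArrow f g → P g → P f

/-- The cocone at stage `j` of a transfinite sequence, whose colimit condition expresses
continuity of the sequence at `j`. -/
@[simps]
def coconeAt {C : Type*} [Category C] {J : Type} [Preorder J] (F : J ⥤ C) (j : J) :
    Cocone (ObjectProperty.ι (fun i : J => i < j) ⋙ F) where
  pt := F.obj j
  ι :=
    { app := fun i => F.map (homOfLE i.2.le)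
      naturality := fun a b f => by
        dsimp
        rw [Category.comp_id, ← F.map_comp]
        exact congrArg F.map (Subsingleton.elim _ _) }

/-- A class of morphisms is stable under transfinite composition. -/
def StableUnderTransfiniteComposition {C : Type*} [Category C] (P : MorphismProperty C) :
    Prop :=
  ∀ (J : Type) (_ : LinearOrder J) (_ : SuccOrder J) (_ : OrderBot J) (_ : WellFoundedLT J)
    (F : J ⥤ C) (c : Cocone F) (_ : IsColimit c),
    (∀ j : J, ¬IsMax j → P (F.map (homOfLE (Order.le_succ j)))) →
    (∀ j : J, Order.IsSuccLimit j → Nonempty (IsColimit (coconeAt F j))) →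
    P (c.ι.app ⊥)

/-- A weakly saturated class of morphisms: closed under pushouts (cobase change),
retracts, and transfinite composition. -/
def WeaklySaturated {C : Type*} [Category C] (P : MorphismProperty C) : Prop :=
  P.IsStableUnderCobaseChange ∧ StableUnderRetracts P ∧ StableUnderTransfiniteComposition P

/-- The weakly saturated class generated by a class of morphisms: the smallest weakly
saturated class containing it. -/
def SaturationOf {C : Type*} [Category C] (S : MorphismProperty C) : MorphismProperty C :=
  fun _ _ f => ∀ (P : MorphismProperty C), WeaklySaturated P → S ≤ P → P f

/-- The generating left horn inclusions `Λ[n, i] ⟶ Δ[n]`, `0 ≤ i < n`. -/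
inductive LeftHorns : (X Y : SSet) → (X ⟶ Y) → Prop where
  | mk (n : ℕ) (i : Fin (n + 1)) (h : (i : ℕ) < n) : LeftHorns _ _ (Λ[n, i].ι)

/-- The generating right horn inclusions `Λ[n, i] ⟶ Δ[n]`, `0 < i ≤ n`. -/
inductive RightHorns : (X Y : SSet) → (X ⟶ Y) → Prop where
  | mk (n : ℕ) (i : Fin (n + 1)) (h : 0 < (i : ℕ)) : RightHorns _ _ (Λ[n, i].ι)

/-- The generating inner horn inclusions `Λ[n, i] ⟶ Δ[n]`, `0 < i < n`. -/
inductive InnerHorns : (X Y : SSet) → (X ⟶ Y) → Prop where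
  | mk (n : ℕ) (i : Fin (n + 1)) (h0 : 0 < (i : ℕ)) (h1 : (i : ℕ) < n) :
      InnerHorns _ _ (Λ[n, i].ι)

/-- Left anodyne maps: the weakly saturated class generated by the horn inclusions
`Λ[n, i] ⟶ Δ[n]` with `0 ≤ i < n`. -/
def LeftAnodyne : MorphismProperty SSet :=
  SaturationOf (fun X Y f => LeftHorns X Y f)

/-- Right anodyne maps: the weakly saturated class generated by the horn inclusions
`Λ[n, i] ⟶ Δ[n]` with `0 < i ≤ n`. -/
def RightAnodyne : MorphismProperty SSet :=
  SaturationOf (fun X Y f => RightHorns X Y f)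

/-- Inner anodyne maps: the weakly saturated class generated by the inner horn inclusions
`Λ[n, i] ⟶ Δ[n]` with `0 < i < n`. -/
def InnerAnodyne : MorphismProperty SSet :=
  SaturationOf (fun X Y f => InnerHorns X Y f)

end Paper
noncomputable section

namespace Paper

open CategoryTheory Limits Simplicial SSet MonoidalCategory CartesianMonoidalCategory

instance homToZeroSubsingleton (x : SimplexCategory) :
    Subsingleton (x ⟶ SimplexCategory.mk 0) :=
  ⟨fun f g => by
    ext i : 3
    apply Subsingleton.elim (α := Fin 1)⟩

instance ptSubsingleton (m : SimplexCategoryᵒᵖ) : Subsingleton (Δ[0].obj m) :=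
  (stdSimplex.objEquiv (n := ⦋0⦌) (m := m)).subsingleton

/-- The unique map to the standard `0`-simplex. -/
def toPt (X : SSet) : X ⟶ Δ[0] where
  app m := ↾fun _ => stdSimplex.const 0 0 m
  naturality _ _ _ := by
    ext
    apply Subsingleton.elim

/-- The vertex `0` of `Δ[1]`, as a map `Δ[0] ⟶ Δ[1]`. -/
def pt0 : Δ[0] ⟶ Δ[1] := SSet.stdSimplex.map (SimplexCategory.const ⦋0⦌ ⦋1⦌ 0)

/-- The vertex `1` of `Δ[1]`, as a map `Δ[0] ⟶ Δ[1]`. -/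
def pt1 : Δ[0] ⟶ Δ[1] := SSet.stdSimplex.map (SimplexCategory.const ⦋0⦌ ⦋1⦌ 1)

/-- An edge `Δ[1] ⟶ B` is degenerate if it factors through a vertex. -/
def DegenerateEdge {B : SSet} (e : Δ[1] ⟶ B) : Prop :=
  ∃ v : Δ[0] ⟶ B, e = toPt Δ[1] ≫ v

/-- The edge `Δ^{0,1}` of `Δ[n]`, as a map `Δ[1] ⟶ Δ[n]` (for `n ≥ 1`). -/
def edge01 (n : ℕ) (hn : 1 ≤ n) : Δ[1] ⟶ Δ[n] :=
  (yonedaEquiv (X := Δ[n]) (n := ⦋1⦌)).symm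
    (stdSimplex.edge n 0 ⟨1, by omega⟩ (by simp [Fin.le_def]))

/-- The edge `Δ^{n-1,n}` of `Δ[n]`, as a map `Δ[1] ⟶ Δ[n]` (for `n ≥ 1`). -/
def edgeLast (n : ℕ) (hn : 1 ≤ n) : Δ[1] ⟶ Δ[n] :=
  (yonedaEquiv (X := Δ[n]) (n := ⦋1⦌)).symm
    (stdSimplex.edge n ⟨n - 1, by omega⟩ (Fin.last n) (by simp [Fin.le_def]))

/-- Inner fibrations: right lifting property against inner horn inclusions. -/
def InnerFibration {X Y : SSet} (p : X ⟶ Y) : Prop :=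
  ∀ (n : ℕ) (i : Fin (n + 1)), 0 < (i : ℕ) → (i : ℕ) < n →
    HasLiftingProperty (Λ[n, i].ι) p

/-- Left fibrations: right lifting property against `Λ[n, i] ⟶ Δ[n]` for `0 ≤ i < n`. -/
def LeftFibration {X Y : SSet} (p : X ⟶ Y) : Prop :=
  ∀ (n : ℕ) (i : Fin (n + 1)), (i : ℕ) < n → HasLiftingProperty (Λ[n, i].ι) p

/-- Kan fibrations: right lifting property against all horn inclusions. -/
def KanFibration {X Y : SSet} (p : X ⟶ Y) : Prop :=
  ∀ (n : ℕ), 1 ≤ n → ∀ (i : Fin (n + 1)), HasLiftingProperty (Λ[n, i].ι) p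

/-- Trivial Kan fibrations: right lifting property against all boundary inclusions. -/
def TrivialKanFibration {X Y : SSet} (p : X ⟶ Y) : Prop :=
  ∀ (n : ℕ), HasLiftingProperty (∂Δ[n].ι) p

/-- Lurie's notion of a bifibration `X → A × B` (HTT, 2.4.7.2). -/
structure IsBifibration {X A B : SSet} (pq : X ⟶ A ⊗ B) : Prop where
  inner : InnerFibration pq
  left : ∀ (n : ℕ) (hn : 1 ≤ n) (u : (Λ[n, 0] : SSet) ⟶ X) (v : Δ[n] ⟶ A ⊗ B),
    u ≫ pq = Λ[n, 0].ι ≫ v →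
    DegenerateEdge (edge01 n hn ≫ v ≫ snd A B) →
    ∃ w : Δ[n] ⟶ X, Λ[n, 0].ι ≫ w = u ∧ w ≫ pq = v
  right : ∀ (n : ℕ) (hn : 1 ≤ n) (u : (Λ[n, Fin.last n] : SSet) ⟶ X) (v : Δ[n] ⟶ A ⊗ B),
    u ≫ pq = Λ[n, Fin.last n].ι ≫ v →
    DegenerateEdge (edgeLast n hn ≫ v ≫ fst A B) →
    ∃ w : Δ[n] ⟶ X, Λ[n, Fin.last n].ι ≫ w = u ∧ w ≫ pq = v

/-- The pushout-product of two maps of simplicial sets. -/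
def pushoutProd {A B X Y : SSet.{u}} (f : A ⟶ B) (g : X ⟶ Y) :
    pushout (f ▷ X) (A ◁ g) ⟶ B ⊗ Y :=
  pushout.desc (B ◁ g) (f ▷ Y) (whisker_exchange f g).symm

/-- The diagonal map `X ⟶ X × X`. -/
def diag (X : SSet) : X ⟶ X ⊗ X := lift (𝟙 X) (𝟙 X)

end Paper

open Paper CategoryTheory SSet MonoidalCategory in
/-- The `n`-fold product of `Δ[1]` with itself. -/
noncomputable def cube : ℕ → SSet
| 0 => Δ[0]
| (n + 1) => Δ[1] ⊗ cube n


section Aux18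
open CategoryTheory Simplicial SSet MonoidalCategory CartesianMonoidalCategory SimplexCategory
noncomputable section

namespace Aux18

/-- `i ↦ min i 1` as a map `Δ[n+1] ⟶ Δ[1]`. -/
noncomputable def coordMap (n : ℕ) : Δ[n+1] ⟶ Δ[1] :=
  SSet.stdSimplex.map (SimplexCategory.Hom.mk
    ⟨fun i => ⟨min i.val 1, by simp only [len_mk]; omega⟩, fun a b h => by
      simp only [Fin.mk_le_mk]
      exact min_le_min (Fin.le_def.mp h) le_rfl⟩)

/-- `i ↦ i - 1` as a map `Δ[n+1] ⟶ Δ[n]`. -/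
noncomputable def predMap (n : ℕ) : Δ[n+1] ⟶ Δ[n] :=
  SSet.stdSimplex.map (SimplexCategory.Hom.mk
    ⟨fun i => ⟨i.val - 1, by simp only [len_mk]; omega⟩, fun a b h => by
      simp only [Fin.mk_le_mk]
      exact Nat.sub_le_sub_right (Fin.le_def.mp h) 1⟩)

/-- Pointwise addition `Δ[1] ⊗ Δ[n] ⟶ Δ[n+1]`. -/
noncomputable def addMap (n : ℕ) : Δ[1] ⊗ Δ[n] ⟶ Δ[n+1] where
  app m := ↾fun x => stdSimplex.objMk
    ⟨fun j => ⟨((stdSimplex.objEquiv x.1).toOrderHom j).val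
        + ((stdSimplex.objEquiv x.2).toOrderHom j).val, by
        have h1 := ((stdSimplex.objEquiv x.1).toOrderHom j).is_lt
        have h2 := ((stdSimplex.objEquiv x.2).toOrderHom j).is_lt
        simp only [len_mk] at h1 h2 ⊢; omega⟩,
      fun a b h => by
        simp only [Fin.mk_le_mk]
        exact Nat.add_le_add
          (Fin.le_def.mp ((stdSimplex.objEquiv x.1).toOrderHom.monotone h))
          (Fin.le_def.mp ((stdSimplex.objEquiv x.2).toOrderHom.monotone h))⟩
  naturality m m' φ := rfl

noncomputable def incl : (n : ℕ) → (Δ[n] ⟶ cube n)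
| 0 => 𝟙 _
| n + 1 => lift (coordMap n) (predMap n ≫ incl n)

noncomputable def retr : (n : ℕ) → (cube n ⟶ Δ[n])
| 0 => 𝟙 _
| n + 1 => (Δ[1] ◁ retr n) ≫ addMap n

lemma lift_coord_pred_add (n : ℕ) :
    lift (coordMap n) (predMap n) ≫ addMap n = 𝟙 Δ[n+1] := by
  apply NatTrans.ext
  funext m; ext x
  apply (stdSimplex.objEquiv).injective
  apply SimplexCategory.Hom.ext
  apply OrderHom.ext
  funext j
  apply Fin.ext
  change min ((stdSimplex.objEquiv x).toOrderHom j).val 1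
      + (((stdSimplex.objEquiv x).toOrderHom j).val - 1)
    = ((stdSimplex.objEquiv x).toOrderHom j).val
  omega

lemma incl_retr (n : ℕ) : incl n ≫ retr n = 𝟙 Δ[n] := by
  induction n with
  | zero => simp [incl, retr]; exact Category.comp_id _
  | succ n ih =>
    show lift (coordMap n) (predMap n ≫ incl n) ≫ ((Δ[1] ◁ retr n) ≫ addMap n) = 𝟙 _
    rw [← Category.assoc]
    have h : lift (coordMap n) (predMap n ≫ incl n) ≫ (Δ[1] ◁ retr n)
        = lift (coordMap n) (predMap n) := by
      apply CartesianMonoidalCategory.hom_ext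
      · simp
      · simp only [Category.assoc, CartesianMonoidalCategory.whiskerLeft_snd,
          CartesianMonoidalCategory.lift_snd_assoc, CartesianMonoidalCategory.lift_snd]
        rw [ih, Category.comp_id]
    rw [h, lift_coord_pred_add]

end Aux18

end
end Aux18

open Paper CategoryTheory SSet MonoidalCategory in
/-- the diagonal of `Δ[n]` is a retract of the diagonal of `(Δ¹)ⁿ`. -/
theorem diag_simplex_retract_diag_cube (n : ℕ) :
    Paper.RetractOfArrow (Paper.diag Δ[n]) (Paper.diag (cube n)) := by
  refine ⟨Aux18.incl n, Aux18.retr n, Aux18.incl n ⊗ₘ Aux18.incl n,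
    Aux18.retr n ⊗ₘ Aux18.retr n, Aux18.incl_retr n, ?_, ?_, ?_⟩
  · rw [MonoidalCategory.tensorHom_comp_tensorHom, Aux18.incl_retr, MonoidalCategory.id_tensorHom_id]
  · apply CartesianMonoidalCategory.hom_ext <;> simp [Paper.diag]
  · apply CartesianMonoidalCategory.hom_ext <;> simp [Paper.diag]
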